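/- There exists a constant c > 0 such that for every real number s with |s| ≥ 2, |√(is)·cos(s)·cosh(√(is)) + i·sin(s)·sinh(√(is))| ≥ c·exp(|s|^{1/2}/√2). -/

import Mathlib

set_option maxHeartbeats 800000

lemma sqrt_half_eq (s : ℝ) (hs : 0 ≤ s) : Real.sqrt s * (Real.sqrt 2 / 2) = Real.sqrt (s/2) := by
  rw [Real.sqrt_div hs]
  have h2 : Real.sqrt 2 * Real.sqrt 2 = 2 := Real.mul_self_sqrt (by norm_num)
  have h2p : (0:ℝ) < Real.sqrt 2 := by positivity
  field_simp
  nlinarith [Real.sqrt_nonneg s]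

lemma mu_pos (s : ℝ) (hs : 0 < s) :
    (Complex.I * s) ^ (1/2 : ℂ) = (Real.sqrt (s/2) : ℂ) * (1 + Complex.I) := by
  have hne : Complex.I * (s:ℂ) ≠ 0 := by
    simp [Complex.ext_iff, hs.ne']
  have habs : ‖Complex.I * (s:ℂ)‖ = s := by
    simp [abs_of_pos hs]
  have harg : (Complex.I * (s:ℂ)).arg = Real.pi / 2 := by
    rw [Complex.arg_eq_pi_div_two_iff]
    constructor <;> simp [hs]
  have hlog : Complex.log (Complex.I * s) = (Real.log s : ℂ) + (Real.pi/2 : ℝ) * Complex.I := by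
    rw [show Complex.log (Complex.I * s) = Real.log ‖Complex.I * (s:ℂ)‖ + (Complex.I * (s:ℂ)).arg * Complex.I from rfl, habs, harg]
  rw [Complex.cpow_def_of_ne_zero hne, hlog]
  have : ((Real.log s : ℂ) + (Real.pi/2 : ℝ) * Complex.I) * (1/2: ℂ)
      = (Real.log s / 2 : ℝ) + ((Real.pi/4 : ℝ) : ℂ) * Complex.I := by push_cast; ring
  rw [this, Complex.exp_add, Complex.exp_mul_I]
  rw [← Complex.ofReal_exp, ← Complex.ofReal_cos, ← Complex.ofReal_sin]
  rw [← Real.log_sqrt hs.le, Real.exp_log (Real.sqrt_pos.mpr hs)]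
  rw [Real.cos_pi_div_four, Real.sin_pi_div_four]
  rw [← sqrt_half_eq s hs.le]
  push_cast
  ring

lemma mu_neg (s : ℝ) (hs : s < 0) :
    (Complex.I * s) ^ (1/2 : ℂ) = (Real.sqrt (-s/2) : ℂ) * (1 - Complex.I) := by
  have hne : Complex.I * (s:ℂ) ≠ 0 := by
    simp [Complex.ext_iff, hs.ne]
  have habs : ‖Complex.I * (s:ℂ)‖ = -s := by
    simp [abs_of_neg hs]
  have harg : (Complex.I * (s:ℂ)).arg = -(Real.pi / 2) := by
    rw [Complex.arg_eq_neg_pi_div_two_iff]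
    constructor <;> simp [hs]
  have hlog : Complex.log (Complex.I * s) = (Real.log (-s) : ℂ) + (-(Real.pi/2) : ℝ) * Complex.I := by
    rw [show Complex.log (Complex.I * s) = Real.log ‖Complex.I * (s:ℂ)‖ + (Complex.I * (s:ℂ)).arg * Complex.I from rfl, habs, harg]
  rw [Complex.cpow_def_of_ne_zero hne, hlog]
  have : ((Real.log (-s) : ℂ) + (-(Real.pi/2) : ℝ) * Complex.I) * (1/2: ℂ)
      = (Real.log (-s) / 2 : ℝ) + ((-(Real.pi/4) : ℝ) : ℂ) * Complex.I := by push_cast; ring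
  rw [this, Complex.exp_add, Complex.exp_mul_I]
  rw [← Complex.ofReal_exp, ← Complex.ofReal_cos, ← Complex.ofReal_sin]
  have hns : (0:ℝ) < -s := by linarith
  rw [← Real.log_sqrt hns.le, Real.exp_log (Real.sqrt_pos.mpr hns)]
  rw [Real.cos_neg, Real.sin_neg, Real.cos_pi_div_four, Real.sin_pi_div_four]
  rw [← sqrt_half_eq (-s) hns.le]
  push_cast
  ring

-- key estimate
lemma key_est (a c σ ε : ℝ) (μ : ℂ) (ha : 1 ≤ a) (h1 : c^2 + σ^2 = 1)
    (hε : ε = 1 ∨ ε = -1) (hμ : μ = (a:ℂ) * (1 + (ε:ℂ) * Complex.I)) :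
    (1/50) * Real.exp a ≤ ‖μ * (c:ℂ) * Complex.cosh μ + Complex.I * (σ:ℂ) * Complex.sinh μ‖ := by
  have hεsq : ε^2 = 1 := by rcases hε with h | h <;> simp [h]
  have hεabs : |ε| = 1 := by rcases hε with h | h <;> simp [h]
  have ha0 : 0 < a := lt_of_lt_of_le one_pos ha
  -- rewrite via exponentials
  have hE : μ * (c:ℂ) * Complex.cosh μ + Complex.I * (σ:ℂ) * Complex.sinh μ
      = Complex.exp μ * ((μ * c + Complex.I * σ)/2) + Complex.exp (-μ) * ((μ * c - Complex.I * σ)/2) := by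
    rw [Complex.cosh, Complex.sinh]
    ring
  rw [hE]
  have hre : μ.re = a := by simp [hμ]
  -- norms of exponentials
  have hexp1 : ‖Complex.exp μ‖ = Real.exp a := by
    rw [Complex.norm_exp, hre]
  have hexp2 : ‖Complex.exp (-μ)‖ = Real.exp (-a) := by
    rw [Complex.norm_exp]
    simp [hre]
  -- lower bound for v
  obtain ⟨v, hv⟩ : ∃ v : ℂ, v = μ * (c:ℂ) + Complex.I * (σ:ℂ) := ⟨_, rfl⟩
  rw [show μ * (c:ℂ) + Complex.I * (σ:ℂ) = v from hv.symm]
  have hvre : v.re = a * c := by simp [hv, hμ]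
  have hvim : v.im = ε * a * c + σ := by
    simp only [hv, hμ, Complex.add_im, Complex.mul_im, Complex.mul_re, Complex.ofReal_re,
      Complex.ofReal_im, Complex.add_re, Complex.one_re, Complex.one_im, Complex.I_re,
      Complex.I_im]
    ring
  have hvlb : (11/25 : ℝ) ≤ ‖v‖ := by
    rcases le_or_gt (9/20 : ℝ) (a * |c|) with h | h
    · calc (11/25 : ℝ) ≤ a * |c| := by linarith
      _ = |v.re| := by rw [hvre, abs_mul, abs_of_pos ha0]
      _ ≤ ‖v‖ := by exact Complex.abs_re_le_norm v
    · have hcle : |c| ≤ a * |c| := le_mul_of_one_le_left (abs_nonneg c) ha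
      have hc2 : c^2 < (9/20)^2 := by
        have : |c| < 9/20 := lt_of_le_of_lt hcle h
        nlinarith [abs_nonneg c, sq_abs c]
      have hσ : (89/100 : ℝ) ≤ |σ| := by
        nlinarith [sq_abs σ, abs_nonneg σ]
      calc (11/25 : ℝ) ≤ |σ| - a * |c| := by linarith
        _ ≤ |ε * a * c + σ| := by
            have : |ε * a * c| = a * |c| := by
              rw [abs_mul, abs_mul, hεabs, abs_of_pos ha0]; ring
            have h2 := abs_sub_abs_le_abs_sub σ (-(ε * a * c))
            simp only [abs_neg, sub_neg_eq_add] at h2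
            rw [this] at h2
            calc |σ| - a * |c| ≤ |σ + ε * a * c| := h2
              _ = |ε * a * c + σ| := by rw [add_comm]
        _ = |v.im| := by rw [hvim]
        _ ≤ ‖v‖ := by exact Complex.abs_im_le_norm v
  -- upper bound for w
  have hμnorm : ‖μ‖ ≤ (3/2) * a := by
    rw [hμ]
    rw [norm_mul]
    have h1 : ‖(a:ℂ)‖ = a := by simp [abs_of_pos ha0]
    have h2 : ‖(1 + (ε:ℂ) * Complex.I)‖ = Real.sqrt 2 := by
      rw [Complex.norm_def, Complex.normSq_apply]
      simp
      rw [show (1:ℝ) + ε * ε = 2 by nlinarith]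
    rw [h1, h2]
    have : Real.sqrt 2 ≤ 3/2 := by
      rw [show (3/2 : ℝ) = Real.sqrt ((3/2)^2) by rw [Real.sqrt_sq]; norm_num]
      apply Real.sqrt_le_sqrt; norm_num
    nlinarith
  have hcabs : |c| ≤ 1 := by nlinarith [sq_abs c, sq_abs σ, abs_nonneg σ, abs_nonneg c]
  have hσabs : |σ| ≤ 1 := by nlinarith [sq_abs c, sq_abs σ, abs_nonneg σ, abs_nonneg c]
  have hwub : ‖μ * c - Complex.I * σ‖ ≤ (3/2) * a + 1 := by
    calc ‖μ * c - Complex.I * σ‖ ≤ ‖μ * c‖ + ‖Complex.I * σ‖ := norm_sub_le _ _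
      _ = ‖μ‖ * |c| + |σ| := by simp [norm_mul]
      _ ≤ (3/2) * a * 1 + 1 := by
          gcongr
      _ = (3/2) * a + 1 := by ring
  -- triangle inequality
  have htri : ‖Complex.exp μ‖ * ‖v‖ / 2 - ‖Complex.exp (-μ)‖ * ‖μ * c - Complex.I * σ‖ / 2
      ≤ ‖Complex.exp μ * (v/2) + Complex.exp (-μ) * ((μ * c - Complex.I * σ)/2)‖ := by
    have h := norm_sub_norm_le (Complex.exp μ * (v/2)) (-(Complex.exp (-μ) * ((μ * c - Complex.I * σ)/2)))
    simp only [norm_neg, sub_neg_eq_add] at h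
    calc ‖Complex.exp μ‖ * ‖v‖ / 2 - ‖Complex.exp (-μ)‖ * ‖μ * c - Complex.I * σ‖ / 2
        = ‖Complex.exp μ * (v/2)‖ - ‖Complex.exp (-μ) * ((μ * c - Complex.I * σ)/2)‖ := by
          simp [norm_mul, norm_div]; ring
      _ ≤ _ := h
  refine le_trans ?_ htri
  rw [hexp1, hexp2]
  -- final arithmetic: 1/50 * e^a ≤ e^a * ‖v‖/2 - e^(-a) * ‖w‖/2
  have hexppos : 0 < Real.exp a := Real.exp_pos a
  have hsplit : Real.exp a * Real.exp a = Real.exp (2*a - 2) * (Real.exp 1 * Real.exp 1) := by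
    rw [← Real.exp_add, ← Real.exp_add, ← Real.exp_add]; ring_nf
  have h2a : 2*a - 1 ≤ Real.exp (2*a - 2) := by
    have := Real.add_one_le_exp (2*a - 2)
    linarith
  have he : (2.7:ℝ) < Real.exp 1 := by
    have := Real.exp_one_gt_d9
    linarith
  have he2 : (7.29:ℝ) ≤ Real.exp 1 * Real.exp 1 := by nlinarith
  have hEE : (2*a - 1) * 7.29 ≤ Real.exp a * Real.exp a := by
    rw [hsplit]
    apply mul_le_mul h2a he2 (by norm_num) (Real.exp_pos _).le
  have hkey : (3/2 * a + 1) * Real.exp (-a) ≤ (2/5) * Real.exp a := by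
    rw [Real.exp_neg, ← div_eq_mul_inv, div_le_iff₀ (Real.exp_pos a)]
    have h' := mul_le_mul_of_nonneg_left hEE (by norm_num : (0:ℝ) ≤ 2/5)
    nlinarith [h']
  have hwpos : 0 ≤ Real.exp (-a) := (Real.exp_pos _).le
  have hA := mul_le_mul_of_nonneg_left hvlb hexppos.le
  have hB := mul_le_mul_of_nonneg_left hwub hwpos
  nlinarith

/-- There exists a constant `c > 0` such that for every real `s` with `|s| ≥ 2`,
`|√(is)·cos(s)·cosh(√(is)) + i·sin(s)·sinh(√(is))| ≥ c·exp(|s|^{1/2}/√2)`,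
where `√z = z ^ (1/2 : ℂ)` is the principal branch of the complex square root. -/
theorem wave_heat_char_function_lower_bound :
    ∃ c : ℝ, 0 < c ∧ ∀ s : ℝ, 2 ≤ |s| →
      c * Real.exp (Real.sqrt |s| / Real.sqrt 2) ≤
        ‖(Complex.I * s) ^ (1/2 : ℂ) * Complex.cos s *
            Complex.cosh ((Complex.I * s) ^ (1/2 : ℂ)) +
          Complex.I * Complex.sin s * Complex.sinh ((Complex.I * s) ^ (1/2 : ℂ))‖ := by
  refine ⟨1/50, by norm_num, fun s hs => ?_⟩
  have hs0 : s ≠ 0 := by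
    intro h; rw [h] at hs; simp at hs; linarith
  have ha1 : (1:ℝ) ≤ Real.sqrt (|s|/2) := by
    rw [show (1:ℝ) = Real.sqrt 1 by simp]
    apply Real.sqrt_le_sqrt; linarith
  have hexp : Real.sqrt |s| / Real.sqrt 2 = Real.sqrt (|s|/2) :=
    (Real.sqrt_div (abs_nonneg s) 2).symm
  rw [hexp, ← Complex.ofReal_cos, ← Complex.ofReal_sin]
  have hpyth : (Real.cos s)^2 + (Real.sin s)^2 = 1 := Real.cos_sq_add_sin_sq s
  rcases lt_or_gt_of_ne hs0 with hneg | hpos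
  · have habs : |s| = -s := abs_of_neg hneg
    have hμ : (Complex.I * s) ^ (1/2 : ℂ)
        = ((Real.sqrt (|s|/2) : ℝ) : ℂ) * (1 + ((-1 : ℝ) : ℂ) * Complex.I) := by
      rw [mu_neg s hneg, habs]
      push_cast
      ring
    exact key_est (Real.sqrt (|s|/2)) (Real.cos s) (Real.sin s) (-1) _ ha1 hpyth (Or.inr rfl) hμ
  · have habs : |s| = s := abs_of_pos hpos
    have hμ : (Complex.I * s) ^ (1/2 : ℂ)
        = ((Real.sqrt (|s|/2) : ℝ) : ℂ) * (1 + ((1 : ℝ) : ℂ) * Complex.I) := by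
      rw [mu_pos s hpos, habs]
      push_cast
      ring
    exact key_est (Real.sqrt (|s|/2)) (Real.cos s) (Real.sin s) 1 _ ha1 hpyth (Or.inl rfl) hμ
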